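/- Let 0 < α ≤ 1 and let ℓ : [1,∞) → [2,∞) be a nondecreasing function with ℓ(s) ≥ 2 for all s. Then for all t ≥ s ≥ 1, (ℓ(t)(t-s)^α - ℓ(t) s^α + ℓ(s) s^α)^{1/α} ≤ (ℓ(t) t^α - ℓ(t) s^α + ℓ(s) s^α)^{1/α} - ℓ(s)^{1/α} · s, provided the expression ℓ(t)(t-s)^α - ℓ(t)s^α + ℓ(s)s^α is nonnegative. -/

import Mathlib

open Real Set

private lemma arg_ge (α y u : ℝ) (hy : 1 ≤ y) (hu : 1 ≤ u) (hα0 : 0 < α) :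
    u ^ α ≤ y * u ^ α - y + 1 := by
  have h : 1 ≤ u ^ α := Real.one_le_rpow hu hα0.le
  nlinarith [mul_nonneg (sub_nonneg.2 hy) (sub_nonneg.2 h)]

private lemma hasDerivF (α : ℝ) (hα0 : 0 < α) (y u : ℝ) (hu : 0 < u)
    (hA : y * u ^ α - y + 1 ≠ 0) :
    HasDerivAt (fun v => (y * v ^ α - y + 1) ^ (1 / α) - v)
      (y * (α * u ^ (α - 1)) * (1 / α) * (y * u ^ α - y + 1) ^ (1 / α - 1) - 1) u := by
  have h1 : HasDerivAt (fun v : ℝ => y * v ^ α - y + 1) (y * (α * u ^ (α - 1))) u := by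
    have := (Real.hasDerivAt_rpow_const (x := u) (p := α) (Or.inl hu.ne')).const_mul y
    simpa using (this.sub_const y).add_const 1
  have h2 := h1.rpow_const (p := 1 / α) (Or.inl hA)
  exact h2.sub (hasDerivAt_id' u)

private lemma keyMono (α : ℝ) (hα0 : 0 < α) (hα1 : α ≤ 1) (y : ℝ) (hy : 1 ≤ y) :
    MonotoneOn (fun u => (y * u ^ α - y + 1) ^ (1 / α) - u) (Ici 1) := by
  have hApos : ∀ u : ℝ, 1 ≤ u → 0 < y * u ^ α - y + 1 := fun u hu => by
    have := arg_ge α y u hy hu hα0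
    have h1 : (1:ℝ) ≤ u ^ α := Real.one_le_rpow hu hα0.le
    linarith
  have hder : ∀ u : ℝ, 1 ≤ u →
      HasDerivAt (fun v => (y * v ^ α - y + 1) ^ (1 / α) - v)
        (y * (α * u ^ (α - 1)) * (1 / α) * (y * u ^ α - y + 1) ^ (1 / α - 1) - 1) u :=
    fun u hu => hasDerivF α hα0 y u (lt_of_lt_of_le one_pos hu) (hApos u hu).ne'
  apply monotoneOn_of_deriv_nonneg (convex_Ici 1)
  · intro u hu
    exact (hder u hu).differentiableAt.continuousAt.continuousWithinAt
  · rw [interior_Ici]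
    intro u hu
    exact (hder u hu.le).differentiableAt.differentiableWithinAt
  · rw [interior_Ici]
    intro u hu
    have hu1 : (1:ℝ) ≤ u := hu.le
    have hupos : (0:ℝ) < u := lt_of_lt_of_le one_pos hu1
    rw [(hder u hu1).deriv]
    have key : 1 ≤ y * (α * u ^ (α - 1)) * (1 / α) * (y * u ^ α - y + 1) ^ (1 / α - 1) := by
      have e1 : y * (α * u ^ (α - 1)) * (1 / α) = y * u ^ (α - 1) := by
        field_simp
      rw [e1]
      -- bound (y * u ^ α - y + 1) ^ (1/α - 1) from below by u ^ (1 - α)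
      have hAge : u ^ α ≤ y * u ^ α - y + 1 := arg_ge α y u hy hu1 hα0
      have hexp : (0:ℝ) ≤ 1 / α - 1 := by
        rw [sub_nonneg, le_div_iff₀ hα0, one_mul]
        exact hα1
      have h2 : (u ^ α) ^ (1 / α - 1) ≤ (y * u ^ α - y + 1) ^ (1 / α - 1) :=
        Real.rpow_le_rpow (Real.rpow_nonneg hupos.le α) hAge hexp
      have h3 : (u ^ α) ^ (1 / α - 1) = u ^ (1 - α) := by
        rw [← Real.rpow_mul hupos.le]
        congr 1
        field_simp
      have h4 : u ^ (α - 1) * u ^ (1 - α) = 1 := by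
        rw [← Real.rpow_add hupos]
        norm_num
      calc (1:ℝ) = 1 * (u ^ (α - 1) * u ^ (1 - α)) := by rw [h4]; ring
        _ ≤ y * (u ^ (α - 1) * u ^ (1 - α)) := by
            apply mul_le_mul_of_nonneg_right hy
            positivity
        _ = y * u ^ (α - 1) * u ^ (1 - α) := by ring
        _ ≤ y * u ^ (α - 1) * (y * u ^ α - y + 1) ^ (1 / α - 1) := by
            apply mul_le_mul_of_nonneg_left (h3 ▸ h2)
            positivity
    linarith

private lemma core (α : ℝ) (hα0 : 0 < α) (hα1 : α ≤ 1) (y z : ℝ) (hy : 1 ≤ y) (hz : 1 ≤ z)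
    (hB : 0 ≤ y * (z - 1) ^ α - y + 1) :
    (y * (z - 1) ^ α - y + 1) ^ (1 / α) + 1 ≤ (y * z ^ α - y + 1) ^ (1 / α) := by
  have hmono := keyMono α hα0 hα1 y hy
  rcases le_or_gt 2 z with hz2 | hz2
  · -- use monotonicity between z - 1 and z
    have h := hmono (show z - 1 ∈ Ici 1 by simp; linarith) (show z ∈ Ici 1 by simpa)
      (by linarith)
    simp only at h
    linarith
  · -- z - 1 ≤ 1 : small-argument bound plus monotonicity from 1 to z
    have hz1 : z - 1 ≤ 1 := by linarith
    have hz0 : 0 ≤ z - 1 := by linarith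
    -- (y (z-1)^α - y + 1)^(1/α) ≤ z - 1
    have hBle : y * (z - 1) ^ α - y + 1 ≤ (z - 1) ^ α := by
      have h1 : (z - 1) ^ α ≤ 1 := Real.rpow_le_one hz0 hz1 hα0.le
      nlinarith [mul_nonneg (sub_nonneg.2 hy) (sub_nonneg.2 h1)]
    have hsmall : (y * (z - 1) ^ α - y + 1) ^ (1 / α) ≤ z - 1 := by
      have h2 : (y * (z - 1) ^ α - y + 1) ^ (1 / α) ≤ ((z - 1) ^ α) ^ (1 / α) :=
        Real.rpow_le_rpow hB hBle (by positivity)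
      have h3 : ((z - 1) ^ α) ^ (1 / α) = z - 1 := by
        rw [← Real.rpow_mul hz0, mul_one_div_cancel hα0.ne', Real.rpow_one]
      linarith [h3 ▸ h2]
    have h := hmono (show (1:ℝ) ∈ Ici 1 by simp) (show z ∈ Ici 1 by simpa) hz
    simp only [Real.one_rpow] at h
    have h1 : (y * 1 - y + 1 : ℝ) = 1 := by ring
    rw [h1, Real.one_rpow] at h
    linarith

theorem stmt_2 (α : ℝ) (hα0 : 0 < α) (hα1 : α ≤ 1) (ℓ : ℝ → ℝ)
    (hmono : ∀ s t : ℝ, 1 ≤ s → s ≤ t → ℓ s ≤ ℓ t)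
    (hℓ2 : ∀ s : ℝ, 1 ≤ s → 2 ≤ ℓ s)
    (s t : ℝ) (hs : 1 ≤ s) (hst : s ≤ t)
    (hnonneg : 0 ≤ ℓ t * (t - s) ^ α - ℓ t * s ^ α + ℓ s * s ^ α) :
    (ℓ t * (t - s) ^ α - ℓ t * s ^ α + ℓ s * s ^ α) ^ (1 / α)
      ≤ (ℓ t * t ^ α - ℓ t * s ^ α + ℓ s * s ^ α) ^ (1 / α) - (ℓ s) ^ (1 / α) * s := by
  have hspos : (0:ℝ) < s := lt_of_lt_of_le one_pos hs
  have hLs : (0:ℝ) < ℓ s := lt_of_lt_of_le two_pos (hℓ2 s hs)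
  have hLt : ℓ s ≤ ℓ t := hmono s t hs hst
  set y : ℝ := ℓ t / ℓ s with hy_def
  set z : ℝ := t / s with hz_def
  have hy : 1 ≤ y := (one_le_div hLs).2 hLt
  have hz : 1 ≤ z := (one_le_div hspos).2 hst
  have hts : 0 ≤ t - s := by linarith
  have hsα : (0:ℝ) < s ^ α := Real.rpow_pos_of_pos hspos α
  -- rewrite the two arguments
  have hz1 : z - 1 = (t - s) / s := by
    rw [hz_def]
    field_simp
  have eB : ℓ t * (t - s) ^ α - ℓ t * s ^ α + ℓ s * s ^ α
      = (ℓ s * s ^ α) * (y * (z - 1) ^ α - y + 1) := by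
    rw [hz1, hy_def, Real.div_rpow hts hspos.le]
    field_simp
  have eA : ℓ t * t ^ α - ℓ t * s ^ α + ℓ s * s ^ α
      = (ℓ s * s ^ α) * (y * z ^ α - y + 1) := by
    rw [hz_def, hy_def, Real.div_rpow (le_trans hspos.le hst) hspos.le]
    field_simp
  have hB : 0 ≤ y * (z - 1) ^ α - y + 1 := by
    rw [eB] at hnonneg
    exact nonneg_of_mul_nonneg_right hnonneg (by positivity)
  have hA : 0 ≤ y * z ^ α - y + 1 := by
    have h1 : (1:ℝ) ≤ z ^ α := Real.one_le_rpow hz hα0.le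
    nlinarith [mul_nonneg (sub_nonneg.2 hy) (sub_nonneg.2 h1)]
  have hC : (ℓ s * s ^ α) ^ (1 / α) = ℓ s ^ (1 / α) * s := by
    rw [Real.mul_rpow hLs.le hsα.le, ← Real.rpow_mul hspos.le,
      mul_one_div_cancel hα0.ne', Real.rpow_one]
  rw [eB, eA, Real.mul_rpow (by positivity) hB, Real.mul_rpow (by positivity) hA, hC]
  have hcore := core α hα0 hα1 y z hy hz hB
  have hpos : (0:ℝ) ≤ ℓ s ^ (1 / α) * s := by positivity
  nlinarith [mul_le_mul_of_nonneg_left hcore hpos]
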